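/- (Theorem 2, upper tail.) Let (Ω, P) be a probability space, let B ⊆ Ω be a measurable event with P(B) = 1−α (the event that the response is positive), and let Z : Ω → ℝ be a random variable whose conditional distribution given B is standard normal, i.e., P(B ∩ Z⁻¹(A)) = (1−α)·γ(A) for every Borel set A ⊆ ℝ. If k is a real number with Φ(k) > (1+α)/2, then P(B ∩ {ω : α + (1−α)·Φ(Z(ω)) > Φ(k)}) = 1−Φ(k). (The event in question is exactly {r⋆ > k}, so Pr(r⋆ > k) = 1−Φ(k).) -/

import Mathlib

open MeasureTheory ProbabilityTheory Set

lemma gauss_cdf_strictMono : StrictMono (cdf (gaussianReal 0 1)) := by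
  intro a b hab
  refine lt_of_le_of_ne (monotone_cdf (gaussianReal 0 1) hab.le) fun h => ?_
  have h1 : (gaussianReal 0 1) (Iic a) = (gaussianReal 0 1) (Iic b) := by
    rw [← ofReal_cdf, ← ofReal_cdf, h]
  have h2 : (gaussianReal 0 1) (Ioc a b) = 0 := by
    have := measure_diff (μ := gaussianReal 0 1) (Iic_subset_Iic.2 hab.le)
      measurableSet_Iic.nullMeasurableSet (measure_ne_top _ _)
    rw [Iic_sdiff_Iic] at this
    rw [this, h1, tsub_self]
  have h3 := gaussianReal_absolutelyContinuous' 0 (v := 1) one_ne_zero h2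
  simp [Real.volume_Ioc, hab, ENNReal.ofReal_eq_zero] at h3
  linarith

lemma gauss_cdf_continuous : Continuous (cdf (gaussianReal 0 1)) := by
  have mono : Monotone (cdf (gaussianReal 0 1)) := monotone_cdf _
  rw [continuous_iff_continuousAt]
  intro x
  rw [mono.continuousAt_iff_leftLim_eq_rightLim]
  have hsing : (gaussianReal 0 1) {x} = 0 :=
    gaussianReal_absolutelyContinuous 0 (v := 1) one_ne_zero (measure_singleton x)
  have h1 : (cdf (gaussianReal 0 1)).measure {x} = 0 := by
    rw [measure_cdf]; exact hsing
  rw [StieltjesFunction.measure_singleton] at h1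
  have h2 : Function.leftLim (cdf (gaussianReal 0 1)) x ≤ cdf (gaussianReal 0 1) x :=
    mono.leftLim_le le_rfl
  have h3 : Function.leftLim (cdf (gaussianReal 0 1)) x = cdf (gaussianReal 0 1) x := by
    rw [ENNReal.ofReal_eq_zero] at h1
    have := (cdf (gaussianReal 0 1)).rightLim_eq x
    linarith
  rw [h3, (cdf (gaussianReal 0 1)).rightLim_eq x]

/-- Theorem 2, upper tail: if P(B) = 1−α, the conditional distribution of Z
given B is standard normal, and Φ(k) > (1+α)/2, then
P(B ∩ {α + (1−α)·Φ(Z) > Φ(k)}) = 1−Φ(k), i.e. Pr(r⋆ > k) = 1−Φ(k). -/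
theorem zaqr_upper_tail
    {Ω : Type*} [MeasurableSpace Ω] (P : Measure Ω) [IsProbabilityMeasure P]
    (α : ℝ) (hα0 : 0 < α) (hα1 : α < 1)
    (B : Set Ω) (hB : MeasurableSet B) (hPB : P B = ENNReal.ofReal (1 - α))
    (Z : Ω → ℝ) (hZ : Measurable Z)
    (hcond : ∀ A : Set ℝ, MeasurableSet A →
      P (B ∩ Z ⁻¹' A) = ENNReal.ofReal (1 - α) * gaussianReal 0 1 A)
    (k : ℝ) (hk : (1 + α) / 2 < cdf (gaussianReal 0 1) k) :
    P (B ∩ {ω : Ω | cdf (gaussianReal 0 1) k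
        < α + (1 - α) * cdf (gaussianReal 0 1) (Z ω)})
      = ENNReal.ofReal (1 - cdf (gaussianReal 0 1) k) := by
  set Φ := cdf (gaussianReal 0 1) with hΦ
  have h1α : (0:ℝ) < 1 - α := by linarith
  set c : ℝ := (Φ k - α) / (1 - α) with hc
  have hc0 : 0 < c := by
    apply div_pos _ h1α
    have : (1 + α) / 2 > α := by linarith
    linarith
  have hc1 : c < 1 := by
    rw [div_lt_one h1α]
    have := cdf_le_one (μ := gaussianReal 0 1) k
    -- need Φ k < 1 strictly
    have hlt : Φ k < 1 := by
      rcases lt_or_eq_of_le this with h | h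
      · exact h
      · exfalso
        have h2 : ENNReal.ofReal (Φ k) = (gaussianReal 0 1) (Iic k) := ofReal_cdf _ k
        have h3 : (gaussianReal 0 1) (Ioi k) = 0 := by
          have := measure_compl (μ := gaussianReal 0 1) (measurableSet_Iic (a := k))
            (measure_ne_top _ _)
          rw [compl_Iic] at this
          rw [this, ← h2, h, measure_univ]
          simp
        have := gaussianReal_absolutelyContinuous' 0 (v := 1) one_ne_zero h3
        simp [Real.volume_Ioi] at this
    linarith
  -- find q with Φ q = c via IVT
  obtain ⟨a, ha⟩ := (tendsto_cdf_atBot (gaussianReal 0 1)).eventually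
    (eventually_lt_nhds hc0) |>.exists
  obtain ⟨b, hb⟩ := (tendsto_cdf_atTop (gaussianReal 0 1)).eventually
    (eventually_gt_nhds hc1) |>.exists
  have hab : a ≤ b := by
    by_contra hcon
    push_neg at hcon
    have := monotone_cdf (gaussianReal 0 1) hcon.le
    rw [← hΦ] at this
    linarith
  obtain ⟨q, _, hq⟩ : ∃ q ∈ Icc a b, Φ q = c := by
    have := intermediate_value_Icc hab (gauss_cdf_continuous.continuousOn (s := Icc a b))
    exact this ⟨ha.le, hb.le⟩
  -- the event equals Z ⁻¹' Ioi q
  have hset : {ω : Ω | Φ k < α + (1 - α) * Φ (Z ω)} = Z ⁻¹' (Ioi q) := by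
    ext ω
    simp only [mem_setOf_eq, mem_preimage, mem_Ioi]
    constructor
    · intro h
      have : c < Φ (Z ω) := by
        rw [hc, div_lt_iff₀ h1α]
        linarith [mul_comm (1 - α) (Φ (Z ω))]
      by_contra hcon
      push_neg at hcon
      have := monotone_cdf (gaussianReal 0 1) hcon
      rw [← hΦ, hq] at this
      linarith
    · intro h
      have : c < Φ (Z ω) := hq ▸ gauss_cdf_strictMono h
      rw [hc, div_lt_iff₀ h1α] at this
      linarith [mul_comm (Φ (Z ω)) (1 - α)]
  rw [hset, hcond _ measurableSet_Ioi]
  have hIoi : (gaussianReal 0 1) (Ioi q) = ENNReal.ofReal (1 - c) := by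
    have h1 : (gaussianReal 0 1) (Ioi q) = 1 - (gaussianReal 0 1) (Iic q) := by
      have := measure_compl (μ := gaussianReal 0 1) (measurableSet_Iic (a := q))
        (measure_ne_top _ _)
      rw [compl_Iic] at this
      rw [this, measure_univ]
    rw [h1, ← ofReal_cdf _ q, ← hΦ, hq,
      ← ENNReal.ofReal_one, ← ENNReal.ofReal_sub _ hc0.le]
  rw [hIoi, ← ENNReal.ofReal_mul h1α.le]
  congr 1
  rw [hc]
  field_simp
  ring
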